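/- Let φ, g : ℝⁿ → ℝ be convex, X ⊆ ℝⁿ convex, b ∈ ℝ, λ* > 0. Suppose x₊, x₋ both minimize L(x) = φ(x) + λ*(g(x) − b) over X, with g(x₋) < b < g(x₊), and suppose g is affine on the segment [x₋, x₊] with the unique α* ∈ (0,1) such that x* = α*·x₊ + (1−α*)·x₋ satisfies g(x*) = b. Then x* is an optimal solution of: minimize φ(x) subject to g(x) ≤ b, x ∈ X. -/
import Mathlib


theorem stmt_19 {n : ℕ} (φ g : (Fin n → ℝ) → ℝ) (X : Set (Fin n → ℝ))
    (hφ : ConvexOn ℝ Set.univ φ) (hg : ConvexOn ℝ Set.univ g)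
    (hX : Convex ℝ X) (b lamStar : ℝ) (hlam : 0 < lamStar)
    (xp xm : Fin n → ℝ) (hxpX : xp ∈ X) (hxmX : xm ∈ X)
    (hminp : ∀ y ∈ X, φ xp + lamStar * (g xp - b) ≤ φ y + lamStar * (g y - b))
    (hminm : ∀ y ∈ X, φ xm + lamStar * (g xm - b) ≤ φ y + lamStar * (g y - b))
    (hgm : g xm < b) (hgp : b < g xp)
    (haff : ∀ t : ℝ, t ∈ Set.Icc (0 : ℝ) 1 →
      g (t • xp + (1 - t) • xm) = t * g xp + (1 - t) * g xm)
    (α : ℝ) (hα : α ∈ Set.Ioo (0 : ℝ) 1)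
    (hgb : g (α • xp + (1 - α) • xm) = b) :
    (α • xp + (1 - α) • xm) ∈ X ∧
      ∀ y ∈ X, g y ≤ b → φ (α • xp + (1 - α) • xm) ≤ φ y := by
  obtain ⟨hα0, hα1⟩ := hα
  set xs := α • xp + (1 - α) • xm with hxs
  have hxsX : xs ∈ X := hX hxpX hxmX hα0.le (by linarith) (by ring)
  refine ⟨hxsX, fun y hyX hgy => ?_⟩
  -- φ(xs) ≤ α φ(xp) + (1-α) φ(xm)
  have hφconv : φ xs ≤ α * φ xp + (1 - α) * φ xm := by
    have := hφ.2 (Set.mem_univ xp) (Set.mem_univ xm) hα0.le (by linarith : (0:ℝ) ≤ 1 - α)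
      (by ring)
    simpa using this
  have hgxs : g xs = α * g xp + (1 - α) * g xm := haff α ⟨hα0.le, hα1.le⟩
  have hp := hminp y hyX
  have hm := hminm y hyX
  have hL : φ xs + lamStar * (g xs - b) ≤ φ y + lamStar * (g y - b) := by
    have : φ xs + lamStar * (g xs - b) ≤
        α * (φ xp + lamStar * (g xp - b)) + (1 - α) * (φ xm + lamStar * (g xm - b)) := by
      rw [hgxs]; nlinarith
    nlinarith
  rw [hgb] at hL
  nlinarith
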